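/- If H is the K_1-corona of a finite simple graph G with vertex set {X_1,...,X_d}, then the closed neighborhood ideal N_H equals the intersection, over all 2^d choices of Z_i ∈ {X_i, Y_i} for i = 1,...,d, of the ideals (Z_1,...,Z_d)R. -/

import Mathlib

open scoped Classical in
/-- The closed neighborhood ideal of a finite simple graph `G`, generated in
`K[X_v : v ∈ V]` by the products of the variables in the closed neighborhoods of the
vertices. -/
noncomputable def nbhdIdeal {V : Type*} [Fintype V] (K : Type*) [Field K]
    (G : SimpleGraph V) : Ideal (MvPolynomial V K) :=
  Ideal.span { m | ∃ i : V,
    m = ∏ j ∈ (insert i {j | G.Adj i j} : Set V).toFinset, MvPolynomial.X j }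

/-- The `K₁`-corona of `G`: add to `G` a pendant vertex (whisker) attached to each
vertex of `G`.  The original vertices are `Sum.inl i` and the whisker vertices are
`Sum.inr i`. -/
def corona {V : Type*} (G : SimpleGraph V) : SimpleGraph (V ⊕ V) where
  Adj a b :=
    (∃ i j, a = Sum.inl i ∧ b = Sum.inl j ∧ G.Adj i j) ∨
    (∃ i, a = Sum.inl i ∧ b = Sum.inr i) ∨
    (∃ i, a = Sum.inr i ∧ b = Sum.inl i)
  symm := by
    constructor
    rintro a b (⟨i, j, rfl, rfl, h⟩ | ⟨i, rfl, rfl⟩ | ⟨i, rfl, rfl⟩)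
    · exact Or.inl ⟨j, i, rfl, rfl, h.symm⟩
    · exact Or.inr (Or.inr ⟨i, rfl, rfl⟩)
    · exact Or.inr (Or.inl ⟨i, rfl, rfl⟩)
  loopless := by
    constructor
    rintro a (⟨i, j, rfl, h1, h⟩ | ⟨i, rfl, h1⟩ | ⟨i, rfl, h1⟩)
    · obtain rfl := Sum.inl_injective h1
      exact G.loopless.irrefl i h
    · exact Sum.inl_ne_inr h1
    · exact Sum.inr_ne_inl h1

open MvPolynomial Finsupp

/-- The exponent of the whisker edge monomial `X_i Y_i`. -/
noncomputable def eWh {V : Type*} (i : V) : (V ⊕ V) →₀ ℕ :=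
  Finsupp.single (Sum.inl i) 1 + Finsupp.single (Sum.inr i) 1

open scoped Classical in
lemma prod_inr {V : Type*} (K : Type*) [Field K] (G : SimpleGraph V) (i : V)
    {inst : Fintype ↥(insert (Sum.inr i) {j | (corona G).Adj (Sum.inr i) j} : Set (V ⊕ V))} :
    ∏ j ∈ (insert (Sum.inr i) {j | (corona G).Adj (Sum.inr i) j} : Set (V ⊕ V)).toFinset,
      (MvPolynomial.X j : MvPolynomial (V ⊕ V) K)
    = monomial (eWh i) 1 := by
  classical
  have hset : {j | (corona G).Adj (Sum.inr i) j} = {Sum.inl i} := by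
    ext b
    simp only [Set.mem_setOf_eq, Set.mem_singleton_iff]
    constructor
    · rintro (⟨a, c, h, _⟩ | ⟨a, h, _⟩ | ⟨a, h, rfl⟩)
      · exact absurd h Sum.inr_ne_inl
      · exact absurd h Sum.inr_ne_inl
      · obtain rfl := Sum.inr_injective h; rfl
    · rintro rfl
      exact Or.inr (Or.inr ⟨i, rfl, rfl⟩)
  have hfin : (insert (Sum.inr i) {j | (corona G).Adj (Sum.inr i) j} : Set (V ⊕ V)).toFinset
      = {Sum.inr i, Sum.inl i} := by
    ext b
    rw [Set.mem_toFinset, Set.mem_insert_iff, hset]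
    simp
  rw [hfin]
  rw [Finset.prod_insert (by simp), Finset.prod_singleton, X, X, monomial_mul, one_mul,
    eWh, add_comm]

open scoped Classical in
lemma prod_inl {V : Type*} (K : Type*) [Field K] (G : SimpleGraph V) (i : V)
    {inst : Fintype ↥(insert (Sum.inl i) {j | (corona G).Adj (Sum.inl i) j} : Set (V ⊕ V))} :
    ∏ j ∈ (insert (Sum.inl i) {j | (corona G).Adj (Sum.inl i) j} : Set (V ⊕ V)).toFinset,
      (MvPolynomial.X j : MvPolynomial (V ⊕ V) K)
    = monomial (eWh i) 1 *
      ∏ j ∈ (((insert (Sum.inl i) {j | (corona G).Adj (Sum.inl i) j} :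
          Set (V ⊕ V)).toFinset.erase (Sum.inl i)).erase (Sum.inr i)),
        MvPolynomial.X j := by
  classical
  set S : Finset (V ⊕ V) :=
    (insert (Sum.inl i) {j | (corona G).Adj (Sum.inl i) j} : Set (V ⊕ V)).toFinset with hS
  have hl : Sum.inl i ∈ S := by
    rw [hS, Set.mem_toFinset]; exact Set.mem_insert _ _
  have hr : Sum.inr i ∈ S.erase (Sum.inl i) := by
    rw [Finset.mem_erase]
    refine ⟨Sum.inr_ne_inl, ?_⟩
    rw [hS, Set.mem_toFinset]
    exact Set.mem_insert_of_mem _ (Or.inr (Or.inl ⟨i, rfl, rfl⟩))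
  rw [← Finset.mul_prod_erase _ _ hl, ← Finset.mul_prod_erase _ _ hr, ← mul_assoc,
    X, X, monomial_mul, one_mul, eWh]

lemma nbhd_corona_eq {V : Type*} [Fintype V] (K : Type*) [Field K] (G : SimpleGraph V) :
    nbhdIdeal K (corona G) =
      Ideal.span ((fun s => monomial s (1 : K)) '' Set.range (eWh (V := V))) := by
  rw [nbhdIdeal]
  apply le_antisymm
  · rw [Ideal.span_le]
    rintro m ⟨v, rfl⟩
    rcases v with i | i
    · rw [prod_inl K G i]
      exact Ideal.mul_mem_right _ _ (Ideal.subset_span ⟨eWh i, ⟨i, rfl⟩, rfl⟩)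
    · rw [prod_inr K G i]
      exact Ideal.subset_span ⟨eWh i, ⟨i, rfl⟩, rfl⟩
  · rw [Ideal.span_le]
    rintro m ⟨s, ⟨i, rfl⟩, rfl⟩
    exact Ideal.subset_span ⟨Sum.inr i, (prod_inr K G i).symm⟩


/-- The closed neighborhood ideal of the `K₁`-corona `H` of a graph `G` on `d` vertices
is the intersection, over all `2^d` choices of `Zᵢ ∈ {Xᵢ, Yᵢ}`, of the ideals
`(Z₁, …, Z_d)`. -/
theorem stmt9 (d : ℕ) (K : Type*) [Field K] (G : SimpleGraph (Fin d)) :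
    nbhdIdeal K (corona G) =
      ⨅ f : Fin d → Bool,
        Ideal.span { m : MvPolynomial (Fin d ⊕ Fin d) K | ∃ i : Fin d,
          m = MvPolynomial.X (if f i then Sum.inl i else Sum.inr i) } := by
  have hsets : ∀ f : Fin d → Bool,
      { m : MvPolynomial (Fin d ⊕ Fin d) K | ∃ i : Fin d,
          m = MvPolynomial.X (if f i then Sum.inl i else Sum.inr i) }
        = MvPolynomial.X '' Set.range (fun i : Fin d => if f i then Sum.inl i else Sum.inr i) := by
    intro f
    ext m
    constructor
    · rintro ⟨i, rfl⟩; exact ⟨_, ⟨i, rfl⟩, rfl⟩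
    · rintro ⟨v, ⟨i, rfl⟩, rfl⟩; exact ⟨i, rfl⟩
  rw [nbhd_corona_eq]
  ext p
  simp only [Ideal.mem_iInf, hsets, mem_ideal_span_X_image, mem_ideal_span_monomial_image]
  constructor
  · intro h f m hm
    obtain ⟨s, ⟨i, rfl⟩, hle⟩ := h m hm
    refine ⟨if f i then Sum.inl i else Sum.inr i, ⟨i, rfl⟩, ?_⟩
    have h1 : 1 ≤ m (Sum.inl i) := by
      have := Finsupp.le_def.mp hle (Sum.inl i)
      simpa [eWh, Finsupp.single_apply] using this
    have h2 : 1 ≤ m (Sum.inr i) := by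
      have := Finsupp.le_def.mp hle (Sum.inr i)
      simpa [eWh, Finsupp.single_apply] using this
    split <;> omega
  · intro h m hm
    have key : ∃ i : Fin d, m (Sum.inl i) ≠ 0 ∧ m (Sum.inr i) ≠ 0 := by
      by_contra hc
      push_neg at hc
      obtain ⟨v, ⟨i, hv⟩, hne⟩ := h (fun i => decide (m (Sum.inl i) = 0)) m hm
      simp only at hv
      by_cases h0 : m (Sum.inl i) = 0
      · simp [h0] at hv
        exact hne (hv ▸ h0)
      · simp [h0] at hv
        exact hne (hv ▸ hc i h0)
    obtain ⟨i, h1, h2⟩ := key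
    refine ⟨eWh i, ⟨i, rfl⟩, Finsupp.le_def.mpr ?_⟩
    intro a
    rcases eq_or_ne a (Sum.inl i) with rfl | hal
    · simpa [eWh, Finsupp.single_apply, Nat.one_le_iff_ne_zero] using h1
    · rcases eq_or_ne a (Sum.inr i) with rfl | har
      · simpa [eWh, Finsupp.single_apply, Nat.one_le_iff_ne_zero] using h2
      · simp [eWh, Finsupp.single_apply, Ne.symm hal, Ne.symm har]
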